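/- Let n, m ≥ 1, 0 < r ≤ 1, and let j, j', k, k' ∈ ℤ. For each pair of dyadic cubes I' ⊂ ℝ^n with side length 2^{j'} and J' ⊂ ℝ^m with side length 2^{j'∨k'}, let a_{I',J'} ≥ 0, and let x_{I'} ∈ I', y_{J'} ∈ J'. Set s = 2^{j∨j'}, t = 2^{(j∨j')∨(k∨k')}. Then for all u ∈ ℝ^n, v ∈ ℝ^m, Σ_{I',J'} s^{1/2} t^{1/2} |I'||J'| a_{I',J'} / [(s + |u − x_{I'}|)^{n+1/2} (t + |v − y_{J'}|)^{m+1/2}] ≤ C · 2^{[n(j∨j'−j') + m((j∨j')∨(k∨k')−(j'∨k'))](1/r − 1)} · [M_s(Σ_{I',J'} a_{I',J'}^r χ_{I'×J'})(u,v)]^{1/r}, provided r > max(2n/(2n+1), 2m/(2m+1)), where M_s is the strong maximal operator over rectangles in ℝ^n × ℝ^m. -/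

import Mathlib

open MeasureTheory Real Set
open scoped ENNReal

noncomputable section

/-- The dyadic cube of ℝ^n with side length `2^j` indexed by `k ∈ ℤ^n`. -/
def dyadicCube (n : ℕ) (j : ℤ) (k : Fin n → ℤ) : Set (EuclideanSpace ℝ (Fin n)) :=
  {x | ∀ i, (k i : ℝ) * 2 ^ j ≤ x i ∧ x i < ((k i : ℝ) + 1) * 2 ^ j}

/-- The strong maximal operator on ℝ^n × ℝ^m (averages over products of balls,
i.e. rectangles, containing the point). -/
def strongMax (n m : ℕ)
    (f : EuclideanSpace ℝ (Fin n) × EuclideanSpace ℝ (Fin m) → ℝ≥0∞)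
    (p : EuclideanSpace ℝ (Fin n) × EuclideanSpace ℝ (Fin m)) : ℝ≥0∞ :=
  ⨆ (c₁ : EuclideanSpace ℝ (Fin n)) (ρ₁ : ℝ) (c₂ : EuclideanSpace ℝ (Fin m)) (ρ₂ : ℝ)
    (_ : p ∈ Metric.ball c₁ ρ₁ ×ˢ Metric.ball c₂ ρ₂),
    (volume (Metric.ball c₁ ρ₁ ×ˢ Metric.ball c₂ ρ₂))⁻¹ *
      ∫⁻ y in Metric.ball c₁ ρ₁ ×ˢ Metric.ball c₂ ρ₂, f y

namespace DMF

/-! ### Powers of two in `ℝ≥0∞` -/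

def pow2 (e : ℝ) : ℝ≥0∞ := (2:ℝ≥0∞) ^ e

lemma pow2_ne_zero (e : ℝ) : pow2 e ≠ 0 := by
  simp [pow2, ENNReal.rpow_eq_zero_iff]

lemma pow2_ne_top (e : ℝ) : pow2 e ≠ ⊤ := by
  simp [pow2, ENNReal.rpow_eq_top_iff]

lemma pow2_pos (e : ℝ) : 0 < pow2 e := pos_iff_ne_zero.2 (pow2_ne_zero e)

lemma pow2_add (a b : ℝ) : pow2 (a+b) = pow2 a * pow2 b :=
  ENNReal.rpow_add _ _ (by norm_num) (by norm_num)

lemma pow2_rpow (a b : ℝ) : (pow2 a) ^ b = pow2 (a*b) := (ENNReal.rpow_mul 2 a b).symm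

lemma pow2_pow (e : ℝ) (k : ℕ) : (pow2 e) ^ k = pow2 (e * k) := by
  rw [← ENNReal.rpow_natCast (pow2 e) k, pow2_rpow]

lemma pow2_inv (e : ℝ) : (pow2 e)⁻¹ = pow2 (-e) := (ENNReal.rpow_neg 2 e).symm

lemma pow2_mono {a b : ℝ} (h : a ≤ b) : pow2 a ≤ pow2 b :=
  ENNReal.rpow_le_rpow_of_exponent_le (by norm_num) h

lemma pow2_zpow (z : ℤ) : (2:ℝ≥0∞)^(z:ℤ) = pow2 (z:ℝ) := (ENNReal.rpow_intCast 2 z).symm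

lemma pow2_ofReal (z : ℤ) : ENNReal.ofReal ((2:ℝ)^(z:ℤ)) = pow2 (z:ℝ) := by
  rw [← Real.rpow_intCast 2 z, ← ENNReal.ofReal_rpow_of_pos (by norm_num)]
  simp [pow2, ENNReal.ofReal_ofNat]

lemma pow2_mul_div (x : ℝ≥0∞) (a b : ℝ) : pow2 a * x / pow2 b = pow2 (a - b) * x := by
  rw [div_eq_mul_inv, pow2_inv, mul_right_comm, ← pow2_add, sub_eq_add_neg]

/-! ### Generic `ℝ≥0∞` facts -/

lemma tsum_rpow_le {ι : Type*} (f : ι → ℝ≥0∞) {r : ℝ} (h0 : 0 < r) (h1 : r ≤ 1) :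
    (∑' i, f i) ^ r ≤ ∑' i, f i ^ r := by
  have fin : ∀ s : Finset ι, (∑ i ∈ s, f i) ^ r ≤ ∑ i ∈ s, f i ^ r := by
    intro s
    induction s using Finset.cons_induction with
    | empty => simp [ENNReal.zero_rpow_of_pos h0]
    | cons a s ha ih =>
      rw [Finset.sum_cons, Finset.sum_cons]
      exact le_trans (ENNReal.rpow_add_le_add_rpow _ _ h0.le h1) (by gcongr)
  rw [ENNReal.tsum_eq_iSup_sum]
  have h2 : (⨆ s : Finset ι, ∑ i ∈ s, f i) ^ r = ⨆ s : Finset ι, (∑ i ∈ s, f i) ^ r := by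
    refine Monotone.map_iSup_of_continuousAt (f := fun x : ℝ≥0∞ => x ^ r) ?_ ?_ ?_
    · exact ENNReal.continuous_rpow_const.continuousAt
    · exact fun x y h => ENNReal.rpow_le_rpow h h0.le
    · simpa using ENNReal.zero_rpow_of_pos h0
  rw [h2]
  exact iSup_le fun s => (fin s).trans (ENNReal.sum_le_tsum s)

lemma geom_ne_top {x : ℝ≥0∞} (hx : x < 1) : (∑' i:ℕ, x ^ i) ≠ ⊤ := by
  rw [ENNReal.tsum_geometric]
  exact ENNReal.inv_ne_top.2 (by simpa [tsub_eq_zero_iff_le] using hx.not_ge)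

/-! ### Geometry of dyadic cubes -/

lemma dyadicCube_eq (n : ℕ) (j : ℤ) (κ : Fin n → ℤ) :
    dyadicCube n j κ = (MeasurableEquiv.toLp 2 (Fin n → ℝ)).symm ⁻¹'
      (Set.univ.pi fun i => Set.Ico ((κ i : ℝ) * 2^j) (((κ i : ℝ)+1) * 2^j)) := by
  ext x
  simp [dyadicCube, Set.mem_pi, Set.mem_Ico]

lemma measurableSet_dyadicCube (n : ℕ) (j : ℤ) (κ : Fin n → ℤ) :
    MeasurableSet (dyadicCube n j κ) := by
  rw [dyadicCube_eq]
  exact (MeasurableEquiv.toLp 2 (Fin n → ℝ)).symm.measurable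
    (MeasurableSet.univ_pi fun i => measurableSet_Ico)

lemma volume_dyadicCube (n : ℕ) (j : ℤ) (κ : Fin n → ℤ) :
    volume (dyadicCube n j κ) = ENNReal.ofReal ((2:ℝ)^j) ^ n := by
  rw [dyadicCube_eq,
    (EuclideanSpace.volume_preserving_symm_measurableEquiv_toLp (Fin n)).measure_preimage
      (MeasurableSet.univ_pi fun i => measurableSet_Ico).nullMeasurableSet,
    volume_pi_pi]
  have : ∀ i : Fin n, volume (Set.Ico ((κ i : ℝ) * 2^j) (((κ i : ℝ)+1) * 2^j))
      = ENNReal.ofReal ((2:ℝ)^j) := by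
    intro i; rw [Real.volume_Ico]; ring_nf
  simp [this, Finset.prod_const]

lemma coord_le_norm {n : ℕ} (w : EuclideanSpace ℝ (Fin n)) (i : Fin n) : |w i| ≤ ‖w‖ := by
  rw [EuclideanSpace.norm_eq, ← Real.sqrt_sq_eq_abs]
  apply Real.sqrt_le_sqrt
  have := Finset.single_le_sum (f := fun i => ‖w i‖^2) (fun i _ => sq_nonneg _)
    (Finset.mem_univ i)
  simpa [Real.norm_eq_abs, sq_abs] using this

lemma norm_sub_le_of_cube {n : ℕ} {j : ℤ} {κ : Fin n → ℤ}
    {x z : EuclideanSpace ℝ (Fin n)} (hx : x ∈ dyadicCube n j κ) (hz : z ∈ dyadicCube n j κ) :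
    ‖x - z‖ ≤ n * 2^j := by
  have hcoord : ∀ i, |x i - z i| ≤ 2^j := by
    intro i
    obtain ⟨hx1, hx2⟩ := hx i
    obtain ⟨hz1, hz2⟩ := hz i
    rw [abs_sub_le_iff]
    constructor <;> nlinarith
  rw [EuclideanSpace.norm_eq]
  have h1 : ∑ i, ‖(x - z) i‖^2 ≤ (n:ℝ) * (2^j)^2 := by
    have : ∀ i : Fin n, ‖(x - z) i‖^2 ≤ (2^j:ℝ)^2 := by
      intro i
      rw [Real.norm_eq_abs, sq_abs]
      have := hcoord i
      have h2 : ((x - z) i : ℝ) = x i - z i := rfl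
      rw [h2]
      nlinarith [abs_nonneg (x i - z i), sq_abs (x i - z i)]
    calc ∑ i, ‖(x - z) i‖^2 ≤ ∑ _i : Fin n, (2^j:ℝ)^2 := Finset.sum_le_sum fun i _ => this i
      _ = (n:ℝ) * (2^j)^2 := by simp [mul_comm]
  have h2 : (n:ℝ) * (2^j)^2 ≤ ((n:ℝ) * 2^j)^2 := by
    have hn0 : (0:ℝ) ≤ n := Nat.cast_nonneg n
    have h2j : (0:ℝ) < 2^j := zpow_pos (by norm_num) j
    have hnn : (n:ℝ) ≤ (n:ℝ)^2 := by exact_mod_cast Nat.le_self_pow two_ne_zero n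
    nlinarith
  calc Real.sqrt (∑ i, ‖(x - z) i‖^2) ≤ Real.sqrt (((n:ℝ) * 2^j)^2) :=
        Real.sqrt_le_sqrt (h1.trans h2)
    _ = (n:ℝ) * 2^j := Real.sqrt_sq (by positivity)

lemma volume_ball_le {n : ℕ} (c : EuclideanSpace ℝ (Fin n)) (ρ : ℝ) :
    volume (Metric.ball c ρ) ≤ ENNReal.ofReal (2*ρ) ^ n := by
  rcases le_or_gt ρ 0 with h | h
  · simp [Metric.ball_eq_empty.2 h]
  · have hsub : Metric.ball c ρ ⊆ (MeasurableEquiv.toLp 2 (Fin n → ℝ)).symm ⁻¹'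
        (Set.univ.pi fun i => Set.Icc (c i - ρ) (c i + ρ)) := by
      intro x hx
      simp only [Set.mem_preimage, Set.mem_pi, Set.mem_univ, forall_true_left, Set.mem_Icc]
      intro i
      have h1 : |x i - c i| ≤ ρ := by
        have h2 := coord_le_norm (x - c) i
        have h3 : ‖x - c‖ < ρ := by
          rw [← dist_eq_norm]; exact Metric.mem_ball.1 hx
        have h4 : ((x - c) i : ℝ) = x i - c i := rfl
        rw [h4] at h2; linarith
      rw [abs_sub_le_iff] at h1
      have h5 : ((MeasurableEquiv.toLp 2 (Fin n → ℝ)).symm x : Fin n → ℝ) i = x i := rfl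
      rw [h5]
      constructor <;> linarith [h1.1, h1.2]
    refine (measure_mono hsub).trans ?_
    rw [(EuclideanSpace.volume_preserving_symm_measurableEquiv_toLp (Fin n)).measure_preimage
      (MeasurableSet.univ_pi fun i => measurableSet_Icc).nullMeasurableSet, volume_pi_pi]
    have : ∀ i : Fin n, volume (Set.Icc (c i - ρ) (c i + ρ)) = ENNReal.ofReal (2*ρ) := by
      intro i; rw [Real.volume_Icc]; ring_nf
    simp [this, Finset.prod_const]

lemma le_strongMax {n m : ℕ} (f : EuclideanSpace ℝ (Fin n) × EuclideanSpace ℝ (Fin m) → ℝ≥0∞)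
    {u : EuclideanSpace ℝ (Fin n)} {v : EuclideanSpace ℝ (Fin m)}
    {c₁ : EuclideanSpace ℝ (Fin n)} {ρ₁ : ℝ} {c₂ : EuclideanSpace ℝ (Fin m)} {ρ₂ : ℝ}
    (h : (u,v) ∈ Metric.ball c₁ ρ₁ ×ˢ Metric.ball c₂ ρ₂) :
    (volume (Metric.ball c₁ ρ₁ ×ˢ Metric.ball c₂ ρ₂))⁻¹ *
      ∫⁻ y in Metric.ball c₁ ρ₁ ×ˢ Metric.ball c₂ ρ₂, f y ≤ strongMax n m f (u,v) :=
  le_iSup_of_le c₁ (le_iSup_of_le ρ₁ (le_iSup_of_le c₂ (le_iSup_of_le ρ₂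
    (le_iSup_of_le h le_rfl))))

/-! ### The fiber mass bound -/

lemma mass_le_strongMax {n m : ℕ} (j' L : ℤ)
    (g : (Fin n → ℤ) × (Fin m → ℤ) → ℝ≥0∞)
    (u : EuclideanSpace ℝ (Fin n)) (v : EuclideanSpace ℝ (Fin m))
    (S : Set ((Fin n → ℤ) × (Fin m → ℤ))) {ρ₁ ρ₂ : ℝ} (hρ₁ : 0 < ρ₁) (hρ₂ : 0 < ρ₂)
    (hsub : ∀ q ∈ S, dyadicCube n j' q.1 ⊆ Metric.ball u ρ₁ ∧
      dyadicCube m L q.2 ⊆ Metric.ball v ρ₂) :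
    (∑' q : S, g q) * (ENNReal.ofReal ((2:ℝ)^j') ^ n * ENNReal.ofReal ((2:ℝ)^L) ^ m)
      ≤ strongMax n m (fun x => ∑' q : (Fin n → ℤ) × (Fin m → ℤ),
          g q * ((dyadicCube n j' q.1 ×ˢ dyadicCube m L q.2).indicator 1 x)) (u,v)
        * (ENNReal.ofReal (2*ρ₁) ^ n * ENNReal.ofReal (2*ρ₂) ^ m) := by
  set B : Set (EuclideanSpace ℝ (Fin n) × EuclideanSpace ℝ (Fin m)) :=
    Metric.ball u ρ₁ ×ˢ Metric.ball v ρ₂ with hB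
  set volS : ℝ≥0∞ := ENNReal.ofReal ((2:ℝ)^j') ^ n * ENNReal.ofReal ((2:ℝ)^L) ^ m with hvolS
  have hmemB : (u,v) ∈ B := by
    constructor <;> simpa using by positivity
  have hvolB0 : volume B ≠ 0 := by
    rw [hB, Measure.volume_eq_prod, Measure.prod_prod]
    exact (ENNReal.mul_pos (Metric.measure_ball_pos volume u hρ₁).ne'
      (Metric.measure_ball_pos volume v hρ₂).ne').ne'
  have hvolBtop : volume B ≠ ⊤ := by
    rw [hB, Measure.volume_eq_prod, Measure.prod_prod]
    exact (ENNReal.mul_lt_top measure_ball_lt_top measure_ball_lt_top).ne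
  have hvolBle : volume B ≤ ENNReal.ofReal (2*ρ₁) ^ n * ENNReal.ofReal (2*ρ₂) ^ m := by
    rw [hB, Measure.volume_eq_prod, Measure.prod_prod]
    exact mul_le_mul' (volume_ball_le u ρ₁) (volume_ball_le v ρ₂)
  have hSq : ∀ q : (Fin n → ℤ) × (Fin m → ℤ),
      MeasurableSet (dyadicCube n j' q.1 ×ˢ dyadicCube m L q.2) := fun q =>
    (measurableSet_dyadicCube n j' q.1).prod (measurableSet_dyadicCube m L q.2)
  have hvolSq : ∀ q : (Fin n → ℤ) × (Fin m → ℤ),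
      volume (dyadicCube n j' q.1 ×ˢ dyadicCube m L q.2) = volS := by
    intro q
    rw [Measure.volume_eq_prod, Measure.prod_prod, volume_dyadicCube, volume_dyadicCube]
  have key : (∑' q : S, g q) * volS ≤ ∫⁻ x in B, (∑' q : (Fin n → ℤ) × (Fin m → ℤ),
      g q * ((dyadicCube n j' q.1 ×ˢ dyadicCube m L q.2).indicator 1 x)) := by
    rw [← ENNReal.tsum_mul_right]
    have step1 : ∀ q : S, g q * volS = ∫⁻ x in B,
        (dyadicCube n j' (q:((Fin n → ℤ) × (Fin m → ℤ))).1 ×ˢ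
          dyadicCube m L (q:((Fin n → ℤ) × (Fin m → ℤ))).2).indicator (fun _ => g q) x := by
      intro q
      rw [lintegral_indicator (hSq q), setLIntegral_const, Measure.restrict_apply (hSq q)]
      have hss : (dyadicCube n j' (q:((Fin n → ℤ) × (Fin m → ℤ))).1 ×ˢ
          dyadicCube m L (q:((Fin n → ℤ) × (Fin m → ℤ))).2) ∩ B
          = dyadicCube n j' (q:((Fin n → ℤ) × (Fin m → ℤ))).1 ×ˢ
            dyadicCube m L (q:((Fin n → ℤ) × (Fin m → ℤ))).2 :=
        Set.inter_eq_left.2 (Set.prod_mono (hsub q q.2).1 (hsub q q.2).2)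
      rw [hss, hvolSq]
    calc ∑' q : S, g q * volS
        = ∑' q : S, ∫⁻ x in B, (dyadicCube n j' (q:((Fin n → ℤ) × (Fin m → ℤ))).1 ×ˢ
            dyadicCube m L (q:((Fin n → ℤ) × (Fin m → ℤ))).2).indicator (fun _ => g q) x :=
          tsum_congr step1
      _ = ∫⁻ x in B, ∑' q : S, (dyadicCube n j' (q:((Fin n → ℤ) × (Fin m → ℤ))).1 ×ˢ
            dyadicCube m L (q:((Fin n → ℤ) × (Fin m → ℤ))).2).indicator (fun _ => g q) x :=
          (lintegral_tsum (μ := volume.restrict B)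
            (f := fun (q : S) => (dyadicCube n j' (q:((Fin n → ℤ) × (Fin m → ℤ))).1 ×ˢ
              dyadicCube m L (q:((Fin n → ℤ) × (Fin m → ℤ))).2).indicator (fun _ => g q))
            (fun q => (measurable_const.indicator (hSq q)).aemeasurable)).symm
      _ ≤ _ := by
          apply lintegral_mono
          intro x
          have heq : ∀ q : (Fin n → ℤ) × (Fin m → ℤ),
              (dyadicCube n j' q.1 ×ˢ dyadicCube m L q.2).indicator (fun _ => g q) x
              = g q * ((dyadicCube n j' q.1 ×ˢ dyadicCube m L q.2).indicator 1 x) := by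
            intro q
            by_cases hx : x ∈ dyadicCube n j' q.1 ×ˢ dyadicCube m L q.2 <;>
              simp [Set.indicator_apply, hx]
          calc ∑' q : S, (dyadicCube n j' (q:((Fin n → ℤ) × (Fin m → ℤ))).1 ×ˢ
                dyadicCube m L (q:((Fin n → ℤ) × (Fin m → ℤ))).2).indicator (fun _ => g q) x
              = ∑' q : S, g (q:((Fin n → ℤ) × (Fin m → ℤ)))
                  * ((dyadicCube n j' (q:((Fin n → ℤ) × (Fin m → ℤ))).1 ×ˢ
                    dyadicCube m L (q:((Fin n → ℤ) × (Fin m → ℤ))).2).indicator 1 x) :=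
                tsum_congr fun q => heq q
            _ ≤ _ := ENNReal.tsum_comp_le_tsum_of_injective Subtype.val_injective _
  calc (∑' q : S, g q) * volS
      = volume B * ((volume B)⁻¹ * ((∑' q : S, g q) * volS)) := by
        rw [← mul_assoc (volume B), ENNReal.mul_inv_cancel hvolB0 hvolBtop, one_mul]
    _ ≤ volume B * (strongMax n m (fun x => ∑' q : (Fin n → ℤ) × (Fin m → ℤ),
          g q * ((dyadicCube n j' q.1 ×ˢ dyadicCube m L q.2).indicator 1 x)) (u,v)) := by
        gcongr
        exact le_trans (by gcongr) (le_strongMax _ hmemB)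
    _ ≤ _ := by rw [mul_comm]; gcongr

/-! ### The constant -/

def Cconst (n m : ℕ) (r : ℝ) : ℝ≥0∞ :=
  (pow2 ((r*((n:ℝ)+1/2) + (n:ℝ)*((n:ℝ)+2)) + (r*((m:ℝ)+1/2) + (m:ℝ)*((m:ℝ)+2))) *
    (∑' i:ℕ, (pow2 ((n:ℝ) - r*((n:ℝ)+1/2)))^i) *
    (∑' i:ℕ, (pow2 ((m:ℝ) - r*((m:ℝ)+1/2)))^i)) ^ (1/r)

end DMF

end

section MainAux
open MeasureTheory Real Set DMF
open scoped ENNReal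

set_option maxHeartbeats 3000000 in
theorem main_aux (n m : ℕ) (hn : 1 ≤ n) (hm : 1 ≤ m)
    (r : ℝ) (hr1 : max ((2 * n : ℝ) / (2 * n + 1)) ((2 * m : ℝ) / (2 * m + 1)) < r)
    (hr2 : r ≤ 1) (j' J K L : ℤ) (hj'J : j' ≤ J) (hLK : L ≤ K)
    (a : (Fin n → ℤ) × (Fin m → ℤ) → ℝ≥0∞)
    (xI : (Fin n → ℤ) → EuclideanSpace ℝ (Fin n))
    (yJ : (Fin m → ℤ) → EuclideanSpace ℝ (Fin m))
    (hxI : ∀ κ, xI κ ∈ dyadicCube n j' κ)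
    (hyJ : ∀ κ, yJ κ ∈ dyadicCube m L κ)
    (u : EuclideanSpace ℝ (Fin n)) (v : EuclideanSpace ℝ (Fin m)) :
    (∑' q : (Fin n → ℤ) × (Fin m → ℤ),
        ((2 : ℝ≥0∞) ^ J) ^ ((1 : ℝ) / 2) *
          ((2 : ℝ≥0∞) ^ K) ^ ((1 : ℝ) / 2) *
          ((2 : ℝ≥0∞) ^ (j' * (n : ℤ)) * (2 : ℝ≥0∞) ^ (L * (m : ℤ))) * a q /
        (((2 : ℝ≥0∞) ^ J + ENNReal.ofReal ‖u - xI q.1‖) ^ ((n : ℝ) + 1 / 2) *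
          ((2 : ℝ≥0∞) ^ K + ENNReal.ofReal ‖v - yJ q.2‖) ^ ((m : ℝ) + 1 / 2)))
      ≤ DMF.Cconst n m r * (2 : ℝ≥0∞) ^
            ((((n : ℝ) * ((J - j' : ℤ) : ℝ) + (m : ℝ) * ((K - L : ℤ) : ℝ))) * (1 / r - 1)) *
          (strongMax n m (fun x => ∑' q : (Fin n → ℤ) × (Fin m → ℤ),
              (a q) ^ r * (dyadicCube n j' q.1 ×ˢ dyadicCube m L q.2).indicator 1 x)
            (u, v)) ^ (1 / r) := by
  classical
  have hn' : (1:ℝ) ≤ n := by exact_mod_cast hn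
  have hm' : (1:ℝ) ≤ m := by exact_mod_cast hm
  have h2ne : (2:ℝ) ≠ 0 := by norm_num
  have hA : ((2*n:ℝ))/(2*n+1) < r := (le_max_left _ _).trans_lt hr1
  have hB : ((2*m:ℝ))/(2*m+1) < r := (le_max_right _ _).trans_lt hr1
  have hr0 : 0 < r := lt_of_le_of_lt (by positivity) hA
  have hδ1 : (n:ℝ) - r*((n:ℝ)+1/2) < 0 := by
    rw [div_lt_iff₀ (by linarith)] at hA; linarith
  have hδ2 : (m:ℝ) - r*((m:ℝ)+1/2) < 0 := by
    rw [div_lt_iff₀ (by linarith)] at hB; linarith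
  set δ₁ : ℝ := (n:ℝ) - r*((n:ℝ)+1/2) with hδ₁def
  set δ₂ : ℝ := (m:ℝ) - r*((m:ℝ)+1/2) with hδ₂def
  set Γ₁ : ℝ≥0∞ := ∑' i:ℕ, (pow2 δ₁)^i with hΓ₁def
  set Γ₂ : ℝ≥0∞ := ∑' i:ℕ, (pow2 δ₂)^i with hΓ₂def
  set c₁ : ℝ := r*((n:ℝ)+1/2) + (n:ℝ)*((n:ℝ)+2) with hc₁def
  set c₂ : ℝ := r*((m:ℝ)+1/2) + (m:ℝ)*((m:ℝ)+2) with hc₂def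
  have hCeq : DMF.Cconst n m r = (pow2 (c₁ + c₂) * Γ₁ * Γ₂) ^ (1/r) := rfl
  -- scales
  set sR : ℝ := (2:ℝ)^J with hsRdef
  have hsR : 0 < sR := zpow_pos (by norm_num) J
  set tR : ℝ := (2:ℝ)^K with htRdef
  have htR : 0 < tR := zpow_pos (by norm_num) K
  have h2j'sR : (2:ℝ)^j' ≤ sR := zpow_le_zpow_right₀ (by norm_num) hj'J
  have h2LtR : (2:ℝ)^L ≤ tR := zpow_le_zpow_right₀ (by norm_num) hLK
  have hn2 : (n:ℝ) ≤ (2:ℝ)^(n:ℤ) := by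
    rw [zpow_natCast]
    exact_mod_cast (Nat.lt_two_pow_self (n := n)).le
  have hm2 : (m:ℝ) ≤ (2:ℝ)^(m:ℤ) := by
    rw [zpow_natCast]
    exact_mod_cast (Nat.lt_two_pow_self (n := m)).le
  -- annulus index functions
  obtain ⟨φ1, hφ1a, hφ1b⟩ : ∃ φ1 : (Fin n → ℤ) → ℕ,
      (∀ κ, ‖u - xI κ‖ < 2^(φ1 κ) * sR) ∧
      (∀ κ, (2:ℝ)^(φ1 κ) * sR ≤ 2*(sR + ‖u - xI κ‖)) := by
    have hex1 : ∀ κ : Fin n → ℤ, ∃ i:ℕ, ‖u - xI κ‖ < 2^i * sR := by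
      intro κ
      obtain ⟨i, hi⟩ := pow_unbounded_of_one_lt (‖u - xI κ‖ / sR) (by norm_num : (1:ℝ) < 2)
      exact ⟨i, by rwa [div_lt_iff₀ hsR] at hi⟩
    refine ⟨fun κ => sInf {i : ℕ | ‖u - xI κ‖ < 2^i * sR},
      fun κ => Nat.sInf_mem (hex1 κ), fun κ => ?_⟩
    beta_reduce
    rcases Nat.eq_zero_or_pos (sInf {i : ℕ | ‖u - xI κ‖ < 2^i * sR}) with h0 | hpos
    · rw [h0]; simp; nlinarith [norm_nonneg (u - xI κ)]
    · obtain ⟨i, hi⟩ := Nat.exists_eq_succ_of_ne_zero hpos.ne'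
      have hlt : i < sInf {i : ℕ | ‖u - xI κ‖ < 2^i * sR} := by omega
      have hnotmem := Nat.notMem_of_lt_sInf hlt
      have h2 : 2^i * sR ≤ ‖u - xI κ‖ := not_lt.1 (by simpa using hnotmem)
      rw [hi, pow_succ]
      nlinarith [hsR]
  obtain ⟨φ2, hφ2a, hφ2b⟩ : ∃ φ2 : (Fin m → ℤ) → ℕ,
      (∀ κ, ‖v - yJ κ‖ < 2^(φ2 κ) * tR) ∧
      (∀ κ, (2:ℝ)^(φ2 κ) * tR ≤ 2*(tR + ‖v - yJ κ‖)) := by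
    have hex2 : ∀ κ : Fin m → ℤ, ∃ i:ℕ, ‖v - yJ κ‖ < 2^i * tR := by
      intro κ
      obtain ⟨i, hi⟩ := pow_unbounded_of_one_lt (‖v - yJ κ‖ / tR) (by norm_num : (1:ℝ) < 2)
      exact ⟨i, by rwa [div_lt_iff₀ htR] at hi⟩
    refine ⟨fun κ => sInf {i : ℕ | ‖v - yJ κ‖ < 2^i * tR},
      fun κ => Nat.sInf_mem (hex2 κ), fun κ => ?_⟩
    beta_reduce
    rcases Nat.eq_zero_or_pos (sInf {i : ℕ | ‖v - yJ κ‖ < 2^i * tR}) with h0 | hpos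
    · rw [h0]; simp; nlinarith [norm_nonneg (v - yJ κ)]
    · obtain ⟨i, hi⟩ := Nat.exists_eq_succ_of_ne_zero hpos.ne'
      have hlt : i < sInf {i : ℕ | ‖v - yJ κ‖ < 2^i * tR} := by omega
      have hnotmem := Nat.notMem_of_lt_sInf hlt
      have h2 : 2^i * tR ≤ ‖v - yJ κ‖ := not_lt.1 (by simpa using hnotmem)
      rw [hi, pow_succ]
      nlinarith [htR]
  -- named pieces of the summand
  set F1 : (Fin n → ℤ) → ℝ≥0∞ :=
    fun κ => ((2 : ℝ≥0∞) ^ J + ENNReal.ofReal ‖u - xI κ‖) ^ ((n : ℝ) + 1 / 2) with hF1def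
  set F2 : (Fin m → ℤ) → ℝ≥0∞ :=
    fun κ => ((2 : ℝ≥0∞) ^ K + ENNReal.ofReal ‖v - yJ κ‖) ^ ((m : ℝ) + 1 / 2) with hF2def
  set ν : ℝ := (J:ℝ)/2 + (K:ℝ)/2 + (j':ℝ)*(n:ℝ) + (L:ℝ)*(m:ℝ) with hνdef
  have hN : ((2 : ℝ≥0∞) ^ J) ^ ((1 : ℝ) / 2) * ((2 : ℝ≥0∞) ^ K) ^ ((1 : ℝ) / 2) *
      ((2 : ℝ≥0∞) ^ (j' * (n : ℤ)) * (2 : ℝ≥0∞) ^ (L * (m : ℤ))) = pow2 ν := by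
    rw [pow2_zpow J, pow2_zpow K, pow2_zpow (j' * (n:ℤ)), pow2_zpow (L * (m:ℤ)),
      pow2_rpow, pow2_rpow, ← pow2_add, ← pow2_add, ← pow2_add, hνdef]
    congr 1
    push_cast
    ring
  -- lower bounds on the denominators
  have hE1 : ∀ κ, pow2 ((((φ1 κ):ℝ) + (J:ℝ) - 1) * ((n:ℝ) + 1/2)) ≤ F1 κ := by
    intro κ
    have hbase : pow2 (((φ1 κ):ℝ) + (J:ℝ) - 1)
        ≤ (2:ℝ≥0∞)^J + ENNReal.ofReal ‖u - xI κ‖ := by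
      have hr1' : (2:ℝ)^(((φ1 κ):ℤ) + J - 1) ≤ sR + ‖u - xI κ‖ := by
        have hb := hφ1b κ
        have he : (2:ℝ)^(((φ1 κ):ℤ) + J - 1) = 2^(φ1 κ) * sR / 2 := by
          rw [zpow_sub₀ h2ne, zpow_add₀ h2ne, zpow_natCast, zpow_one, hsRdef]
        rw [he]; linarith
      calc pow2 (((φ1 κ):ℝ) + (J:ℝ) - 1)
          = ENNReal.ofReal ((2:ℝ)^(((φ1 κ):ℤ) + J - 1)) := by
            rw [pow2_ofReal]; congr 1; push_cast; ring
        _ ≤ ENNReal.ofReal (sR + ‖u - xI κ‖) := ENNReal.ofReal_le_ofReal hr1'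
        _ = (2:ℝ≥0∞)^J + ENNReal.ofReal ‖u - xI κ‖ := by
            rw [ENNReal.ofReal_add hsR.le (norm_nonneg _), hsRdef, pow2_ofReal, pow2_zpow]
    rw [hF1def, ← pow2_rpow]
    exact ENNReal.rpow_le_rpow hbase (by positivity)
  have hE2 : ∀ κ, pow2 ((((φ2 κ):ℝ) + (K:ℝ) - 1) * ((m:ℝ) + 1/2)) ≤ F2 κ := by
    intro κ
    have hbase : pow2 (((φ2 κ):ℝ) + (K:ℝ) - 1)
        ≤ (2:ℝ≥0∞)^K + ENNReal.ofReal ‖v - yJ κ‖ := by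
      have hr1' : (2:ℝ)^(((φ2 κ):ℤ) + K - 1) ≤ tR + ‖v - yJ κ‖ := by
        have hb := hφ2b κ
        have he : (2:ℝ)^(((φ2 κ):ℤ) + K - 1) = 2^(φ2 κ) * tR / 2 := by
          rw [zpow_sub₀ h2ne, zpow_add₀ h2ne, zpow_natCast, zpow_one, htRdef]
        rw [he]; linarith
      calc pow2 (((φ2 κ):ℝ) + (K:ℝ) - 1)
          = ENNReal.ofReal ((2:ℝ)^(((φ2 κ):ℤ) + K - 1)) := by
            rw [pow2_ofReal]; congr 1; push_cast; ring
        _ ≤ ENNReal.ofReal (tR + ‖v - yJ κ‖) := ENNReal.ofReal_le_ofReal hr1'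
        _ = (2:ℝ≥0∞)^K + ENNReal.ofReal ‖v - yJ κ‖ := by
            rw [ENNReal.ofReal_add htR.le (norm_nonneg _), htRdef, pow2_ofReal, pow2_zpow]
    rw [hF2def, ← pow2_rpow]
    exact ENNReal.rpow_le_rpow hbase (by positivity)
  -- exponent bookkeeping
  set G : ℕ → ℕ → ℝ := fun i i' => ν*r - ((((i:ℝ)) + (J:ℝ) - 1)*((n:ℝ)+1/2)*r
    + (((i'):ℝ) + (K:ℝ) - 1)*((m:ℝ)+1/2)*r) with hGdef
  set H : ℕ → ℕ → ℝ := fun i i' => (((i:ℝ)) + (J:ℝ) + (n:ℝ) + 2)*(n:ℝ)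
    + ((((i'):ℝ)) + (K:ℝ) + (m:ℝ) + 2)*(m:ℝ) - ((j':ℝ)*(n:ℝ) + (L:ℝ)*(m:ℝ)) with hHdef
  set BB : ℝ := ((n:ℝ)*((J:ℝ)-(j':ℝ)) + (m:ℝ)*((K:ℝ)-(L:ℝ)))*(1-r) with hBBdef
  -- the strong maximal function value
  set M : ℝ≥0∞ := strongMax n m (fun x => ∑' q : (Fin n → ℤ) × (Fin m → ℤ),
      (a q) ^ r * (dyadicCube n j' q.1 ×ˢ dyadicCube m L q.2).indicator 1 x) (u, v) with hMdef
  -- pointwise bound on the r-th power of each term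
  have hT : ∀ q : (Fin n → ℤ) × (Fin m → ℤ),
      (pow2 ν * a q / (F1 q.1 * F2 q.2)) ^ r ≤ pow2 (G (φ1 q.1) (φ2 q.2)) * a q ^ r := by
    intro q
    calc (pow2 ν * a q / (F1 q.1 * F2 q.2)) ^ r
        = pow2 (ν*r) * a q ^ r / ((F1 q.1 * F2 q.2) ^ r) := by
          rw [ENNReal.div_rpow_of_nonneg _ _ hr0.le, ENNReal.mul_rpow_of_nonneg _ _ hr0.le,
            pow2_rpow]
      _ ≤ pow2 (ν*r) * a q ^ r / (pow2 ((((φ1 q.1):ℝ) + (J:ℝ) - 1)*((n:ℝ)+1/2)*r)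
            * pow2 ((((φ2 q.2):ℝ) + (K:ℝ) - 1)*((m:ℝ)+1/2)*r)) := by
          apply ENNReal.div_le_div_left
          rw [ENNReal.mul_rpow_of_nonneg _ _ hr0.le]
          apply mul_le_mul'
          · rw [← pow2_rpow]
            exact ENNReal.rpow_le_rpow (hE1 q.1) hr0.le
          · rw [← pow2_rpow]
            exact ENNReal.rpow_le_rpow (hE2 q.2) hr0.le
      _ = pow2 (G (φ1 q.1) (φ2 q.2)) * a q ^ r := by
          rw [← pow2_add, pow2_mul_div, hGdef]
  -- the fiber map
  set Φ : (Fin n → ℤ) × (Fin m → ℤ) → ℕ × ℕ := fun q => (φ1 q.1, φ2 q.2) with hΦdef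
  -- fiber mass bound
  have hmassp : ∀ p : ℕ × ℕ,
      (∑' q : (Φ ⁻¹' {p} : Set ((Fin n → ℤ) × (Fin m → ℤ))), a (q:(Fin n → ℤ) × (Fin m → ℤ)) ^ r)
        ≤ M * pow2 (H p.1 p.2) := by
    intro p
    set ρ₁ : ℝ := (2:ℝ)^(((p.1:ℕ):ℤ) + J + (n:ℤ) + 1) with hρ₁def
    set ρ₂ : ℝ := (2:ℝ)^(((p.2:ℕ):ℤ) + K + (m:ℤ) + 1) with hρ₂def
    have hρ₁ : 0 < ρ₁ := zpow_pos (by norm_num) _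
    have hρ₂ : 0 < ρ₂ := zpow_pos (by norm_num) _
    have hsub : ∀ q ∈ (Φ ⁻¹' {p} : Set ((Fin n → ℤ) × (Fin m → ℤ))),
        dyadicCube n j' q.1 ⊆ Metric.ball u ρ₁ ∧ dyadicCube m L q.2 ⊆ Metric.ball v ρ₂ := by
      intro q hq
      have hqp : Φ q = p := hq
      have hq1 : φ1 q.1 = p.1 := congrArg Prod.fst hqp
      have hq2 : φ2 q.2 = p.2 := congrArg Prod.snd hqp
      constructor
      · intro z hz
        have hd := hφ1a q.1
        rw [hq1] at hd
        have hdiam : ‖xI q.1 - z‖ ≤ (n:ℝ) * 2^j' := norm_sub_le_of_cube (hxI q.1) hz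
        have htri : ‖u - z‖ ≤ ‖u - xI q.1‖ + ‖xI q.1 - z‖ := by
          have hsplit : u - z = (u - xI q.1) + (xI q.1 - z) := by abel
          rw [hsplit]; exact norm_add_le _ _
        rw [Metric.mem_ball, dist_comm, dist_eq_norm]
        have hpow : ρ₁ = 2^(p.1:ℕ) * (sR * ((2:ℝ)^(n:ℤ) * 2)) := by
          rw [hρ₁def, zpow_add₀ h2ne, zpow_add₀ h2ne, zpow_add₀ h2ne, zpow_one,
            zpow_natCast, hsRdef]
          ring
        rw [hpow]
        have h1p : (1:ℝ) ≤ 2^(p.1:ℕ) := one_le_pow₀ (by norm_num)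
        have h2n' : (0:ℝ) < 2^(n:ℤ) := zpow_pos (by norm_num) _
        have h2n1 : (1:ℝ) ≤ (2:ℝ)^(n:ℤ) := by linarith
        have hdn : (n:ℝ) * 2^j' ≤ 2^(n:ℤ) * sR :=
          mul_le_mul hn2 h2j'sR (by positivity) h2n'.le
        have hprod : (0:ℝ) ≤ (2^(p.1:ℕ) - 1) * ((2:ℝ)^(n:ℤ) - 1) * sR :=
          mul_nonneg (mul_nonneg (by linarith) (by linarith)) hsR.le
        nlinarith [hd, hdiam, htri, hdn, hsR]
      · intro z hz
        have hd := hφ2a q.2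
        rw [hq2] at hd
        have hdiam : ‖yJ q.2 - z‖ ≤ (m:ℝ) * 2^L := norm_sub_le_of_cube (hyJ q.2) hz
        have htri : ‖v - z‖ ≤ ‖v - yJ q.2‖ + ‖yJ q.2 - z‖ := by
          have hsplit : v - z = (v - yJ q.2) + (yJ q.2 - z) := by abel
          rw [hsplit]; exact norm_add_le _ _
        rw [Metric.mem_ball, dist_comm, dist_eq_norm]
        have hpow : ρ₂ = 2^(p.2:ℕ) * (tR * ((2:ℝ)^(m:ℤ) * 2)) := by
          rw [hρ₂def, zpow_add₀ h2ne, zpow_add₀ h2ne, zpow_add₀ h2ne, zpow_one,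
            zpow_natCast, htRdef]
          ring
        rw [hpow]
        have h1p : (1:ℝ) ≤ 2^(p.2:ℕ) := one_le_pow₀ (by norm_num)
        have h2m' : (0:ℝ) < 2^(m:ℤ) := zpow_pos (by norm_num) _
        have h2m1 : (1:ℝ) ≤ (2:ℝ)^(m:ℤ) := by linarith
        have hdm : (m:ℝ) * 2^L ≤ 2^(m:ℤ) * tR :=
          mul_le_mul hm2 h2LtR (by positivity) h2m'.le
        have hprod : (0:ℝ) ≤ (2^(p.2:ℕ) - 1) * ((2:ℝ)^(m:ℤ) - 1) * tR :=
          mul_nonneg (mul_nonneg (by linarith) (by linarith)) htR.le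
        nlinarith [hd, hdiam, htri, hdm, htR]
    have hmass := mass_le_strongMax (n:=n) (m:=m) j' L (fun q => a q ^ r) u v
      (Φ ⁻¹' {p}) hρ₁ hρ₂ hsub
    rw [← hMdef] at hmass
    -- rewrite the volumes as powers of two
    have hvolS : ENNReal.ofReal ((2:ℝ)^j') ^ n * ENNReal.ofReal ((2:ℝ)^L) ^ m
        = pow2 ((j':ℝ)*(n:ℝ) + (L:ℝ)*(m:ℝ)) := by
      rw [pow2_ofReal, pow2_ofReal, pow2_pow, pow2_pow, ← pow2_add]
    have hvolB : ENNReal.ofReal (2*ρ₁) ^ n * ENNReal.ofReal (2*ρ₂) ^ m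
        = pow2 ((((p.1:ℕ):ℝ) + (J:ℝ) + (n:ℝ) + 2)*(n:ℝ)
            + (((p.2:ℕ):ℝ) + (K:ℝ) + (m:ℝ) + 2)*(m:ℝ)) := by
      have h1 : 2*ρ₁ = (2:ℝ)^(((p.1:ℕ):ℤ) + J + (n:ℤ) + 2) := by
        conv_rhs => rw [show ((p.1:ℕ):ℤ) + J + (n:ℤ) + 2 = (((p.1:ℕ):ℤ) + J + (n:ℤ) + 1) + 1 from by ring, zpow_add_one₀ h2ne]
        rw [hρ₁def]; ring
      have h2 : 2*ρ₂ = (2:ℝ)^(((p.2:ℕ):ℤ) + K + (m:ℤ) + 2) := by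
        conv_rhs => rw [show ((p.2:ℕ):ℤ) + K + (m:ℤ) + 2 = (((p.2:ℕ):ℤ) + K + (m:ℤ) + 1) + 1 from by ring, zpow_add_one₀ h2ne]
        rw [hρ₂def]; ring
      rw [h1, h2, pow2_ofReal, pow2_ofReal, pow2_pow, pow2_pow, ← pow2_add]
      congr 1
      push_cast
      ring
    rw [hvolS, hvolB] at hmass
    -- divide through by the cube volume
    calc (∑' q : (Φ ⁻¹' {p} : Set ((Fin n → ℤ) × (Fin m → ℤ))),
          a (q:(Fin n → ℤ) × (Fin m → ℤ)) ^ r)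
        = (∑' q : (Φ ⁻¹' {p} : Set ((Fin n → ℤ) × (Fin m → ℤ))),
            a (q:(Fin n → ℤ) × (Fin m → ℤ)) ^ r)
            * pow2 ((j':ℝ)*(n:ℝ) + (L:ℝ)*(m:ℝ)) * pow2 (-((j':ℝ)*(n:ℝ) + (L:ℝ)*(m:ℝ))) := by
          rw [mul_assoc, ← pow2_add, add_neg_cancel]
          simp [pow2]
      _ ≤ (M * pow2 ((((p.1:ℕ):ℝ) + (J:ℝ) + (n:ℝ) + 2)*(n:ℝ)
            + (((p.2:ℕ):ℝ) + (K:ℝ) + (m:ℝ) + 2)*(m:ℝ)))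
            * pow2 (-((j':ℝ)*(n:ℝ) + (L:ℝ)*(m:ℝ))) := by
          exact mul_le_mul_left hmass _
      _ = M * pow2 (H p.1 p.2) := by
          rw [mul_assoc, ← pow2_add]
          have heq9 : (((p.1:ℕ):ℝ) + (J:ℝ) + (n:ℝ) + 2)*(n:ℝ)
              + (((p.2:ℕ):ℝ) + (K:ℝ) + (m:ℝ) + 2)*(m:ℝ) + -((j':ℝ)*(n:ℝ) + (L:ℝ)*(m:ℝ))
              = H p.1 p.2 := by simp only [hHdef]; ring
          rw [heq9]
  -- per fiber bound
  have hfib : ∀ p : ℕ × ℕ,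
      (∑' q : (Φ ⁻¹' {p} : Set ((Fin n → ℤ) × (Fin m → ℤ))),
        (pow2 ν * a (q:(Fin n → ℤ) × (Fin m → ℤ))
          / (F1 (q:(Fin n → ℤ) × (Fin m → ℤ)).1 * F2 (q:(Fin n → ℤ) × (Fin m → ℤ)).2)) ^ r)
      ≤ pow2 (G p.1 p.2 + H p.1 p.2) * M := by
    intro p
    calc (∑' q : (Φ ⁻¹' {p} : Set ((Fin n → ℤ) × (Fin m → ℤ))),
          (pow2 ν * a (q:(Fin n → ℤ) × (Fin m → ℤ))
            / (F1 (q:(Fin n → ℤ) × (Fin m → ℤ)).1 * F2 (q:(Fin n → ℤ) × (Fin m → ℤ)).2)) ^ r)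
        ≤ ∑' q : (Φ ⁻¹' {p} : Set ((Fin n → ℤ) × (Fin m → ℤ))),
            pow2 (G p.1 p.2) * a (q:(Fin n → ℤ) × (Fin m → ℤ)) ^ r := by
          apply ENNReal.tsum_le_tsum
          intro q
          have hqp : Φ (q:(Fin n → ℤ) × (Fin m → ℤ)) = p := q.2
          have hq1 : φ1 (q:(Fin n → ℤ) × (Fin m → ℤ)).1 = p.1 := congrArg Prod.fst hqp
          have hq2 : φ2 (q:(Fin n → ℤ) × (Fin m → ℤ)).2 = p.2 := congrArg Prod.snd hqp
          have := hT (q:(Fin n → ℤ) × (Fin m → ℤ))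
          rwa [hq1, hq2] at this
      _ = pow2 (G p.1 p.2) * ∑' q : (Φ ⁻¹' {p} : Set ((Fin n → ℤ) × (Fin m → ℤ))),
            a (q:(Fin n → ℤ) × (Fin m → ℤ)) ^ r := ENNReal.tsum_mul_left
      _ ≤ pow2 (G p.1 p.2) * (M * pow2 (H p.1 p.2)) := mul_le_mul_right (hmassp p) _
      _ = pow2 (G p.1 p.2 + H p.1 p.2) * M := by
          rw [pow2_add]; ring
  -- sum over fibers
  have hsum : (∑' q : (Fin n → ℤ) × (Fin m → ℤ),
      (pow2 ν * a q / (F1 q.1 * F2 q.2)) ^ r)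
      ≤ M * (pow2 BB * (pow2 (c₁ + c₂) * Γ₁ * Γ₂)) := by
    rw [← ENNReal.tsum_fiberwise (fun q => (pow2 ν * a q / (F1 q.1 * F2 q.2)) ^ r) Φ]
    calc (∑' p : ℕ × ℕ, ∑' q : (Φ ⁻¹' {p} : Set ((Fin n → ℤ) × (Fin m → ℤ))),
          (pow2 ν * a (q:(Fin n → ℤ) × (Fin m → ℤ))
            / (F1 (q:(Fin n → ℤ) × (Fin m → ℤ)).1 * F2 (q:(Fin n → ℤ) × (Fin m → ℤ)).2)) ^ r)
        ≤ ∑' p : ℕ × ℕ, pow2 (G p.1 p.2 + H p.1 p.2) * M := ENNReal.tsum_le_tsum hfib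
      _ = M * ∑' p : ℕ × ℕ, pow2 (G p.1 p.2 + H p.1 p.2) := by
          rw [ENNReal.tsum_mul_right, mul_comm]
      _ = M * (pow2 BB * (pow2 (c₁ + c₂) * Γ₁ * Γ₂)) := by
          congr 1
          have hexp : ∀ p : ℕ × ℕ, pow2 (G p.1 p.2 + H p.1 p.2)
              = pow2 (BB + (c₁ + c₂)) * (pow2 δ₁)^p.1 * (pow2 δ₂)^p.2 := by
            intro p
            rw [pow2_pow, pow2_pow, ← pow2_add, ← pow2_add]
            congr 1
            rw [hGdef, hHdef, hBBdef, hc₁def, hc₂def, hδ₁def, hδ₂def, hνdef]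
            ring
          calc ∑' p : ℕ × ℕ, pow2 (G p.1 p.2 + H p.1 p.2)
              = ∑' p : ℕ × ℕ, pow2 (BB + (c₁ + c₂)) * (pow2 δ₁)^p.1 * (pow2 δ₂)^p.2 :=
                tsum_congr hexp
            _ = ∑' i : ℕ, ∑' i' : ℕ, pow2 (BB + (c₁ + c₂)) * (pow2 δ₁)^i * (pow2 δ₂)^i' :=
                ENNReal.tsum_prod (f := fun i i' => pow2 (BB + (c₁ + c₂)) * (pow2 δ₁)^i * (pow2 δ₂)^i')
            _ = ∑' i : ℕ, (pow2 (BB + (c₁ + c₂)) * (pow2 δ₁)^i) * Γ₂ := by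
                refine tsum_congr fun i => ?_
                rw [hΓ₂def]
                exact ENNReal.tsum_mul_left
            _ = (∑' i : ℕ, pow2 (BB + (c₁ + c₂)) * (pow2 δ₁)^i) * Γ₂ :=
                ENNReal.tsum_mul_right
            _ = pow2 (BB + (c₁ + c₂)) * Γ₁ * Γ₂ := by
                rw [hΓ₁def]
                exact congrArg (· * Γ₂) ENNReal.tsum_mul_left
            _ = pow2 BB * (pow2 (c₁ + c₂) * Γ₁ * Γ₂) := by
                rw [pow2_add]; ring
  -- conclusion
  calc (∑' q : (Fin n → ℤ) × (Fin m → ℤ),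
      ((2 : ℝ≥0∞) ^ J) ^ ((1 : ℝ) / 2) *
        ((2 : ℝ≥0∞) ^ K) ^ ((1 : ℝ) / 2) *
        ((2 : ℝ≥0∞) ^ (j' * (n : ℤ)) * (2 : ℝ≥0∞) ^ (L * (m : ℤ))) * a q /
      (((2 : ℝ≥0∞) ^ J + ENNReal.ofReal ‖u - xI q.1‖) ^ ((n : ℝ) + 1 / 2) *
        ((2 : ℝ≥0∞) ^ K + ENNReal.ofReal ‖v - yJ q.2‖) ^ ((m : ℝ) + 1 / 2)))
      = ∑' q : (Fin n → ℤ) × (Fin m → ℤ), pow2 ν * a q / (F1 q.1 * F2 q.2) := by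
        refine tsum_congr fun q => ?_
        rw [hN, hF1def, hF2def]
    _ ≤ (∑' q : (Fin n → ℤ) × (Fin m → ℤ), (pow2 ν * a q / (F1 q.1 * F2 q.2)) ^ r) ^ (1/r) := by
        have h := tsum_rpow_le (fun q : (Fin n → ℤ) × (Fin m → ℤ) =>
          pow2 ν * a q / (F1 q.1 * F2 q.2)) hr0 hr2
        have h2 := ENNReal.rpow_le_rpow h (by positivity : (0:ℝ) ≤ 1/r)
        rwa [← ENNReal.rpow_mul, mul_one_div, div_self hr0.ne', ENNReal.rpow_one] at h2
    _ ≤ (M * (pow2 BB * (pow2 (c₁ + c₂) * Γ₁ * Γ₂))) ^ (1/r) :=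
        ENNReal.rpow_le_rpow hsum (by positivity)
    _ = DMF.Cconst n m r * (2 : ℝ≥0∞) ^
          ((((n : ℝ) * ((J - j' : ℤ) : ℝ) + (m : ℝ) * ((K - L : ℤ) : ℝ))) * (1 / r - 1)) *
        M ^ (1/r) := by
        rw [ENNReal.mul_rpow_of_nonneg _ _ (by positivity : (0:ℝ) ≤ 1/r),
          ENNReal.mul_rpow_of_nonneg _ _ (by positivity : (0:ℝ) ≤ 1/r),
          pow2_rpow, hCeq]
        have hexp2 : BB * (1/r)
            = (((n : ℝ) * ((J - j' : ℤ) : ℝ) + (m : ℝ) * ((K - L : ℤ) : ℝ))) * (1 / r - 1) := by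
          rw [hBBdef]
          push_cast
          field_simp
        rw [hexp2]
        simp only [pow2]
        ring


end MainAux

section Main
open MeasureTheory Real Set DMF
open scoped ENNReal

theorem discrete_majorization_flag (n m : ℕ) (hn : 1 ≤ n) (hm : 1 ≤ m)
    (r : ℝ) (hr1 : max ((2 * n : ℝ) / (2 * n + 1)) ((2 * m : ℝ) / (2 * m + 1)) < r)
    (hr2 : r ≤ 1) :
    ∃ C : ℝ≥0∞, 0 < C ∧ C ≠ ⊤ ∧ ∀ j j' k k' : ℤ,
      ∀ a : (Fin n → ℤ) × (Fin m → ℤ) → ℝ≥0∞,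
      ∀ xI : (Fin n → ℤ) → EuclideanSpace ℝ (Fin n),
      ∀ yJ : (Fin m → ℤ) → EuclideanSpace ℝ (Fin m),
        (∀ κ, xI κ ∈ dyadicCube n j' κ) →
        (∀ κ, yJ κ ∈ dyadicCube m (max j' k') κ) →
      ∀ (u : EuclideanSpace ℝ (Fin n)) (v : EuclideanSpace ℝ (Fin m)),
        (∑' q : (Fin n → ℤ) × (Fin m → ℤ),
            ((2 : ℝ≥0∞) ^ (max j j')) ^ ((1 : ℝ) / 2) *
              ((2 : ℝ≥0∞) ^ (max (max j j') (max k k'))) ^ ((1 : ℝ) / 2) *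
              ((2 : ℝ≥0∞) ^ (j' * (n : ℤ)) * (2 : ℝ≥0∞) ^ (max j' k' * (m : ℤ))) * a q /
            (((2 : ℝ≥0∞) ^ (max j j') + ENNReal.ofReal ‖u - xI q.1‖) ^ ((n : ℝ) + 1 / 2) *
              ((2 : ℝ≥0∞) ^ (max (max j j') (max k k')) +
                  ENNReal.ofReal ‖v - yJ q.2‖) ^ ((m : ℝ) + 1 / 2)))
          ≤ C * (2 : ℝ≥0∞) ^
                ((((n : ℝ) * ((max j j' - j' : ℤ) : ℝ) +
                    (m : ℝ) * ((max (max j j') (max k k') - max j' k' : ℤ) : ℝ))) *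
                  (1 / r - 1)) *
              (strongMax n m (fun x => ∑' q : (Fin n → ℤ) × (Fin m → ℤ),
                  (a q) ^ r *
                    (dyadicCube n j' q.1 ×ˢ dyadicCube m (max j' k') q.2).indicator 1 x)
                (u, v)) ^ (1 / r) := by
  have hA : ((2*n:ℝ))/(2*n+1) < r := (le_max_left _ _).trans_lt hr1
  have hB : ((2*m:ℝ))/(2*m+1) < r := (le_max_right _ _).trans_lt hr1
  have hn' : (1:ℝ) ≤ n := by exact_mod_cast hn
  have hm' : (1:ℝ) ≤ m := by exact_mod_cast hm
  have hr0 : 0 < r := lt_of_le_of_lt (by positivity) hA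
  have hδ1 : (n:ℝ) - r*((n:ℝ)+1/2) < 0 := by
    rw [div_lt_iff₀ (by linarith)] at hA; linarith
  have hδ2 : (m:ℝ) - r*((m:ℝ)+1/2) < 0 := by
    rw [div_lt_iff₀ (by linarith)] at hB; linarith
  have hΓ1top : (∑' i:ℕ, (pow2 ((n:ℝ) - r*((n:ℝ)+1/2)))^i) ≠ ⊤ :=
    geom_ne_top (ENNReal.rpow_lt_one_of_one_lt_of_neg (by norm_num) hδ1)
  have hΓ2top : (∑' i:ℕ, (pow2 ((m:ℝ) - r*((m:ℝ)+1/2)))^i) ≠ ⊤ :=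
    geom_ne_top (ENNReal.rpow_lt_one_of_one_lt_of_neg (by norm_num) hδ2)
  have hΓ1zero : (∑' i:ℕ, (pow2 ((n:ℝ) - r*((n:ℝ)+1/2)))^i) ≠ 0 := by
    refine (lt_of_lt_of_le zero_lt_one ?_).ne'
    simpa using ENNReal.le_tsum (f := fun i:ℕ => (pow2 ((n:ℝ) - r*((n:ℝ)+1/2)))^i) 0
  have hΓ2zero : (∑' i:ℕ, (pow2 ((m:ℝ) - r*((m:ℝ)+1/2)))^i) ≠ 0 := by
    refine (lt_of_lt_of_le zero_lt_one ?_).ne'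
    simpa using ENNReal.le_tsum (f := fun i:ℕ => (pow2 ((m:ℝ) - r*((m:ℝ)+1/2)))^i) 0
  have hX0 : (pow2 ((r*((n:ℝ)+1/2) + (n:ℝ)*((n:ℝ)+2)) + (r*((m:ℝ)+1/2) + (m:ℝ)*((m:ℝ)+2))) *
      (∑' i:ℕ, (pow2 ((n:ℝ) - r*((n:ℝ)+1/2)))^i) *
      (∑' i:ℕ, (pow2 ((m:ℝ) - r*((m:ℝ)+1/2)))^i)) ≠ 0 :=
    mul_ne_zero (mul_ne_zero (pow2_ne_zero _) hΓ1zero) hΓ2zero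
  have hXtop : (pow2 ((r*((n:ℝ)+1/2) + (n:ℝ)*((n:ℝ)+2)) + (r*((m:ℝ)+1/2) + (m:ℝ)*((m:ℝ)+2))) *
      (∑' i:ℕ, (pow2 ((n:ℝ) - r*((n:ℝ)+1/2)))^i) *
      (∑' i:ℕ, (pow2 ((m:ℝ) - r*((m:ℝ)+1/2)))^i)) ≠ ⊤ :=
    ENNReal.mul_ne_top (ENNReal.mul_ne_top (pow2_ne_top _) hΓ1top) hΓ2top
  refine ⟨DMF.Cconst n m r, ?_, ?_, ?_⟩
  · exact ENNReal.rpow_pos (pos_iff_ne_zero.2 hX0) hXtop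
  · exact ENNReal.rpow_ne_top_of_nonneg (by positivity) hXtop
  · intro j j' k k' a xI yJ hxI hyJ u v
    exact main_aux n m hn hm r hr1 hr2 j' (max j j') (max (max j j') (max k k')) (max j' k')
      (le_max_right _ _)
      (max_le ((le_max_right j j').trans (le_max_left _ _))
        ((le_max_right k k').trans (le_max_right _ _)))
      a xI yJ hxI hyJ u v

end Main
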